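/- Let M be a finite monoid with zero. Every principal factor of M is either null (its square is zero) or 0-simple. -/
import Mathlib


/-- `Jset a = M a M`, the principal two-sided ideal generated by `a`. -/
def Jset {M : Type*} [Monoid M] (a : M) : Set M := {z | ∃ u v : M, z = u * a * v}

/-- `Iset a`: the elements of `J(a)` generating a strictly smaller two-sided ideal. -/
def Iset {M : Type*} [Monoid M] (a : M) : Set M := {x ∈ Jset a | a ∉ Jset x}

/-- Every principal factor `P(a) = J(a)/I(a)` of a finite monoid with zero is
either null (its square is zero in the Rees quotient) or 0-simple (its square is
nonzero and its only ideals are zero and everything).  Here the zero class of the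
Rees quotient is `insert 0 (Iset a)`, and ideals of `P(a)` correspond to sets `T`
with `insert 0 (Iset a) ⊆ T ⊆ Jset a` closed under left and right multiplication
by elements of `Jset a`. -/
theorem principal_factor_null_or_zero_simple {M : Type*} [MonoidWithZero M] [Finite M]
    (a : M) :
    (∀ s ∈ Jset a, ∀ t ∈ Jset a, s * t ∈ insert (0 : M) (Iset a)) ∨
    ((∃ s ∈ Jset a, ∃ t ∈ Jset a, s * t ∉ insert (0 : M) (Iset a)) ∧
      ∀ T : Set M, insert (0 : M) (Iset a) ⊆ T → T ⊆ Jset a →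
        (∀ s ∈ Jset a, ∀ t ∈ T, s * t ∈ T) →
        (∀ s ∈ T, ∀ t ∈ Jset a, s * t ∈ T) →
        T = insert (0 : M) (Iset a) ∨ T = Jset a) := by
  by_cases h : ∀ s ∈ Jset a, ∀ t ∈ Jset a, s * t ∈ insert (0 : M) (Iset a)
  · exact Or.inl h
  right
  push_neg at h
  obtain ⟨s, hs, t, ht, hst⟩ := h
  refine ⟨⟨s, hs, t, ht, hst⟩, ?_⟩
  obtain ⟨p, q, hs'⟩ := hs
  obtain ⟨r, w, ht'⟩ := ht
  have hstJ : s * t ∈ Jset a := ⟨p, q * (r * a * w), by rw [hs', ht']; simp [mul_assoc]⟩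
  have haJ : a ∈ Jset (s * t) := by
    by_contra hcon
    exact hst (Set.mem_insert_iff.mpr (Or.inr ⟨hstJ, hcon⟩))
  obtain ⟨c, d, hcd⟩ := haJ
  set α : M := c * p * a * (q * r * (c * p)) with hα
  set β : M := q * r * a * (w * d * (w * d)) with hβ
  have hαJ : α ∈ Jset a := ⟨c * p, q * r * (c * p), hα⟩
  have hβJ : β ∈ Jset a := ⟨q * r, w * d * (w * d), hβ⟩
  have A : a = (c * p * a * (q * r)) * a * (w * d) := by
    conv_lhs => rw [hcd, hs', ht']
    simp [mul_assoc]
  have B : (c * p) * a * ((q * r) * a * (w * d)) = a := by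
    conv_rhs => rw [hcd, hs', ht']
    simp [mul_assoc]
  have key : a = α * a * β := by
    calc a = (c * p * a * (q * r)) * a * (w * d) := A
    _ = (c * p * a * (q * r)) * ((c * p) * a * ((q * r) * a * (w * d))) * (w * d) := by
        rw [B]
    _ = α * a * β := by rw [hα, hβ]; simp [mul_assoc]
  intro T hIT hTJ hL hR
  by_cases hT : T ⊆ insert (0 : M) (Iset a)
  · exact Or.inl (subset_antisymm hT hIT)
  right
  obtain ⟨x, hxT, hxn⟩ := Set.not_subset.mp hT
  have hxJ : x ∈ Jset a := hTJ hxT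
  have haJx : a ∈ Jset x := by
    by_contra hcon
    exact hxn (Set.mem_insert_iff.mpr (Or.inr ⟨hxJ, hcon⟩))
  obtain ⟨u, v, huv⟩ := haJx
  have hαuJ : α * u ∈ Jset a := ⟨c * p, q * r * (c * p) * u, by rw [hα]; simp [mul_assoc]⟩
  have hvβJ : v * β ∈ Jset a := ⟨v * (q * r), w * d * (w * d), by rw [hβ]; simp [mul_assoc]⟩
  have haeq : a = ((α * u) * x) * (v * β) := by
    conv_lhs => rw [key, huv]
    simp [mul_assoc]
  have haT : a ∈ T := by
    rw [haeq]
    exact hR _ (hL _ hαuJ _ hxT) _ hvβJ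
  refine subset_antisymm hTJ ?_
  rintro z ⟨g, h', hz⟩
  have hgαJ : g * α ∈ Jset a := ⟨g * (c * p), q * r * (c * p), by rw [hα]; simp [mul_assoc]⟩
  have hβhJ : β * h' ∈ Jset a := ⟨q * r, w * d * (w * d) * h', by rw [hβ]; simp [mul_assoc]⟩
  have hzeq : z = ((g * α) * a) * (β * h') := by
    rw [hz]
    conv_lhs => rw [key]
    simp [mul_assoc]
  rw [hzeq]
  exact hR _ (hL _ hgαJ _ haT) _ hβhJ
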